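/- For a bimonad H = (H, m, e, δ, ε, λ) on a category A, the following are equivalent: (a) γ = Hm ∘ δH : HH → HH is an isomorphism; (b) γ' = mH ∘ Hδ : HH → HH is an isomorphism; (c) H has an antipode, i.e., a natural transformation S : H → H with m ∘ SH ∘ δ = e ∘ ε = m ∘ HS ∘ δ. -/

import Mathlib

open CategoryTheory

universe v u

variable {A : Type u} [Category.{v} A]

/-- `(H, m, e)` is a monad on `A` (stated componentwise). -/
structure IsMonadOn (H : A ⥤ A) (m : H ⋙ H ⟶ H) (e : 𝟭 A ⟶ H) : Prop where
  assoc : ∀ a : A, H.map (m.app a) ≫ m.app a = m.app (H.obj a) ≫ m.app a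
  unit_left : ∀ a : A, e.app (H.obj a) ≫ m.app a = 𝟙 (H.obj a)
  unit_right : ∀ a : A, H.map (e.app a) ≫ m.app a = 𝟙 (H.obj a)

/-- `(H, δ, ε)` is a comonad on `A` (stated componentwise). -/
structure IsComonadOn (H : A ⥤ A) (δ : H ⟶ H ⋙ H) (ε : H ⟶ 𝟭 A) : Prop where
  coassoc : ∀ a : A, δ.app a ≫ H.map (δ.app a) = δ.app a ≫ δ.app (H.obj a)
  counit_left : ∀ a : A, δ.app a ≫ ε.app (H.obj a) = 𝟙 (H.obj a)
  counit_right : ∀ a : A, δ.app a ≫ H.map (ε.app a) = 𝟙 (H.obj a)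

/-- `(H, m, e, δ, ε, lam)` is a bimonad on `A`: a monad and a comonad such that `ε` is a
monad morphism to the identity monad, `e` is a comonad morphism from the identity comonad,
and `lam : HH ⟶ HH` is a mixed distributive law (entwining) from the monad to the comonad
satisfying `δ ∘ m = Hm ∘ lam H ∘ Hδ`. -/
structure IsBimonadOn (H : A ⥤ A) (m : H ⋙ H ⟶ H) (e : 𝟭 A ⟶ H)
    (δ : H ⟶ H ⋙ H) (ε : H ⟶ 𝟭 A) (lam : H ⋙ H ⟶ H ⋙ H) : Prop where
  monad : IsMonadOn H m e
  comonad : IsComonadOn H δ ε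
  ent_unit : ∀ a : A, e.app (H.obj a) ≫ lam.app a = H.map (e.app a)
  ent_counit : ∀ a : A, lam.app a ≫ ε.app (H.obj a) = H.map (ε.app a)
  ent_delta : ∀ a : A, lam.app a ≫ δ.app (H.obj a)
      = H.map (δ.app a) ≫ lam.app (H.obj a) ≫ H.map (lam.app a)
  ent_mul : ∀ a : A, m.app (H.obj a) ≫ lam.app a
      = H.map (lam.app a) ≫ lam.app (H.obj a) ≫ H.map (m.app a)
  compat : ∀ a : A, m.app a ≫ δ.app a
      = H.map (δ.app a) ≫ lam.app (H.obj a) ≫ H.map (m.app a)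
  counit_monad : ∀ a : A, m.app a ≫ ε.app a = H.map (ε.app a) ≫ ε.app a
  unit_comonad : ∀ a : A, e.app a ≫ δ.app a = e.app a ≫ e.app (H.obj a)
  counit_unit : ∀ a : A, e.app a ≫ ε.app a = 𝟙 a


section
variable {H : A ⥤ A} {m : H ⋙ H ⟶ H} {e : 𝟭 A ⟶ H}
    {δ : H ⟶ H ⋙ H} {ε : H ⟶ 𝟭 A}

/-- Pure rewriting: `γ_a ≫ β̃_a = δ_{Ha} ≫ H(inner)`. -/
theorem gamma_beta_expand (hC : IsComonadOn H δ ε) (S : H ⟶ H) (a : A) :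
    (δ.app (H.obj a) ≫ H.map (m.app a)) ≫
      (δ.app (H.obj a) ≫ H.map (S.app (H.obj a) ≫ m.app a))
    = δ.app (H.obj a) ≫
        H.map (δ.app (H.obj a) ≫ H.map (m.app a) ≫ S.app (H.obj a) ≫ m.app a) := by
  have n := reassoc_of% (δ.naturality (m.app a))
  simp only [Category.assoc, n, ← reassoc_of% hC.coassoc (H.obj a), ← Functor.map_comp]

theorem beta_gamma_expand (hC : IsComonadOn H δ ε) (S : H ⟶ H) (a : A) :
    (δ.app (H.obj a) ≫ H.map (S.app (H.obj a) ≫ m.app a)) ≫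
      (δ.app (H.obj a) ≫ H.map (m.app a))
    = δ.app (H.obj a) ≫
        H.map (δ.app (H.obj a) ≫ H.map (S.app (H.obj a) ≫ m.app a) ≫ m.app a) := by
  have n := reassoc_of% (δ.naturality (S.app (H.obj a) ≫ m.app a))
  simp only [Category.assoc, n, ← reassoc_of% hC.coassoc (H.obj a), ← Functor.map_comp]

end

section
variable {H : A ⥤ A} {m : H ⋙ H ⟶ H} {e : 𝟭 A ⟶ H}
    {δ : H ⟶ H ⋙ H} {ε : H ⟶ 𝟭 A}

theorem gamma_comp_beta (hM : IsMonadOn H m e) (hC : IsComonadOn H δ ε) (S : H ⟶ H)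
    (hS1 : ∀ a : A, δ.app a ≫ S.app (H.obj a) ≫ m.app a = ε.app a ≫ e.app a) (a : A) :
    (δ.app (H.obj a) ≫ H.map (m.app a)) ≫
      (δ.app (H.obj a) ≫ H.map (S.app (H.obj a) ≫ m.app a)) = 𝟙 _ := by
  rw [gamma_beta_expand hC S a]
  have inner : δ.app (H.obj a) ≫ H.map (m.app a) ≫ S.app (H.obj a) ≫ m.app a
      = ε.app (H.obj a) := by
    have n := reassoc_of% (S.naturality (m.app a))
    rw [n, hM.assoc a, reassoc_of% (hS1 (H.obj a)), hM.unit_left a, Category.comp_id]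
  rw [inner]
  exact hC.counit_right (H.obj a)

theorem beta_comp_gamma (hM : IsMonadOn H m e) (hC : IsComonadOn H δ ε) (S : H ⟶ H)
    (hS2 : ∀ a : A, δ.app a ≫ H.map (S.app a) ≫ m.app a = ε.app a ≫ e.app a) (a : A) :
    (δ.app (H.obj a) ≫ H.map (S.app (H.obj a) ≫ m.app a)) ≫
      (δ.app (H.obj a) ≫ H.map (m.app a)) = 𝟙 _ := by
  rw [beta_gamma_expand hC S a]
  have inner : δ.app (H.obj a) ≫ H.map (S.app (H.obj a) ≫ m.app a) ≫ m.app a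
      = ε.app (H.obj a) := by
    rw [Functor.map_comp, Category.assoc, hM.assoc a, reassoc_of% (hS2 (H.obj a)),
      hM.unit_left a, Category.comp_id]
  rw [inner]
  exact hC.counit_right (H.obj a)

end

section
variable {H : A ⥤ A} {m : H ⋙ H ⟶ H} {e : 𝟭 A ⟶ H}
    {δ : H ⟶ H ⋙ H} {ε : H ⟶ 𝟭 A}

theorem gammap_betap_expand (hM : IsMonadOn H m e) (S : H ⟶ H) (a : A) :
    (H.map (δ.app a) ≫ m.app (H.obj a)) ≫
      (H.map (δ.app a ≫ S.app (H.obj a)) ≫ m.app (H.obj a))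
    = H.map (δ.app a ≫ H.map (δ.app a ≫ S.app (H.obj a)) ≫ m.app (H.obj a)) ≫
        m.app (H.obj a) := by
  have n := reassoc_of% (m.naturality (δ.app a ≫ S.app (H.obj a)))
  simp only [Category.assoc, ← n]
  rw [← hM.assoc (H.obj a)]
  simp only [← Category.assoc, ← Functor.map_comp]

theorem betap_gammap_expand (hM : IsMonadOn H m e) (S : H ⟶ H) (a : A) :
    (H.map (δ.app a ≫ S.app (H.obj a)) ≫ m.app (H.obj a)) ≫
      (H.map (δ.app a) ≫ m.app (H.obj a))
    = H.map (δ.app a ≫ S.app (H.obj a) ≫ H.map (δ.app a) ≫ m.app (H.obj a)) ≫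
        m.app (H.obj a) := by
  have n := reassoc_of% (m.naturality (δ.app a))
  simp only [Category.assoc, ← n]
  rw [← hM.assoc (H.obj a)]
  simp only [← Category.assoc, ← Functor.map_comp]

theorem gammap_comp_betap (hM : IsMonadOn H m e) (hC : IsComonadOn H δ ε) (S : H ⟶ H)
    (hS2 : ∀ a : A, δ.app a ≫ H.map (S.app a) ≫ m.app a = ε.app a ≫ e.app a) (a : A) :
    (H.map (δ.app a) ≫ m.app (H.obj a)) ≫
      (H.map (δ.app a ≫ S.app (H.obj a)) ≫ m.app (H.obj a)) = 𝟙 _ := by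
  rw [gammap_betap_expand hM S a]
  have inner : δ.app a ≫ H.map (δ.app a ≫ S.app (H.obj a)) ≫ m.app (H.obj a)
      = e.app (H.obj a) := by
    rw [Functor.map_comp, Category.assoc, reassoc_of% (hC.coassoc a), hS2 (H.obj a),
      reassoc_of% (hC.counit_left a)]
  rw [inner]
  exact hM.unit_right (H.obj a)

theorem betap_comp_gammap (hM : IsMonadOn H m e) (hC : IsComonadOn H δ ε) (S : H ⟶ H)
    (hS1 : ∀ a : A, δ.app a ≫ S.app (H.obj a) ≫ m.app a = ε.app a ≫ e.app a) (a : A) :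
    (H.map (δ.app a ≫ S.app (H.obj a)) ≫ m.app (H.obj a)) ≫
      (H.map (δ.app a) ≫ m.app (H.obj a)) = 𝟙 _ := by
  rw [betap_gammap_expand hM S a]
  have inner : δ.app a ≫ S.app (H.obj a) ≫ H.map (δ.app a) ≫ m.app (H.obj a)
      = e.app (H.obj a) := by
    have n := reassoc_of% (S.naturality (δ.app a))
    rw [← n, reassoc_of% (hC.coassoc a), hS1 (H.obj a), reassoc_of% (hC.counit_left a)]
  rw [inner]
  exact hM.unit_right (H.obj a)

end

section
variable {H : A ⥤ A} {m : H ⋙ H ⟶ H} {e : 𝟭 A ⟶ H}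
    {δ : H ⟶ H ⋙ H} {ε : H ⟶ 𝟭 A}

/-- γ is natural. -/
theorem gamma_natural (a b : A) (f : a ⟶ b) :
    H.map (H.map f) ≫ (δ.app (H.obj b) ≫ H.map (m.app b))
      = (δ.app (H.obj a) ≫ H.map (m.app a)) ≫ H.map (H.map f) := by
  have n := reassoc_of% (δ.naturality (H.map f))
  have n2 := m.naturality f
  simp only [Functor.comp_obj, Functor.comp_map] at n2
  simp only [Category.assoc, n, ← Functor.map_comp, n2]

/-- γ is left `H`-linear. -/
theorem gamma_linear (hM : IsMonadOn H m e) (a : A) :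
    H.map (m.app a) ≫ (δ.app (H.obj a) ≫ H.map (m.app a))
      = (δ.app (H.obj (H.obj a)) ≫ H.map (m.app (H.obj a))) ≫ H.map (m.app a) := by
  have n := reassoc_of% (δ.naturality (m.app a))
  simp only [Category.assoc, n, ← Functor.map_comp, hM.assoc a]

/-- `He ≫ γ = δ`. -/
theorem unit_comp_gamma (hM : IsMonadOn H m e) (a : A) :
    H.map (e.app a) ≫ (δ.app (H.obj a) ≫ H.map (m.app a)) = δ.app a := by
  have n := reassoc_of% (δ.naturality (e.app a))
  simp only [Category.assoc, n, ← Functor.map_comp, hM.unit_right a]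
  simp

/-- `γ ≫ εH = m`. -/
theorem gamma_comp_counit (hC : IsComonadOn H δ ε) (a : A) :
    (δ.app (H.obj a) ≫ H.map (m.app a)) ≫ ε.app (H.obj a) = m.app a := by
  have n := ε.naturality (m.app a)
  simp only [Functor.comp_obj, Functor.comp_map, Functor.id_obj, Functor.id_map] at n
  simp only [Category.assoc, n, reassoc_of% (hC.counit_left (H.obj a))]

end

section
variable {H : A ⥤ A} {m : H ⋙ H ⟶ H} {e : 𝟭 A ⟶ H}
    {δ : H ⟶ H ⋙ H} {ε : H ⟶ 𝟭 A}

theorem gammaG1 (hγ : ∀ a : A, IsIso (δ.app (H.obj a) ≫ H.map (m.app a)))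
    (a b : A) (f : a ⟶ b) : H.map (H.map f) ≫
      inv (δ.app (H.obj b) ≫ H.map (m.app b))
      = inv (δ.app (H.obj a) ≫ H.map (m.app a)) ≫ H.map (H.map f) := by
  haveI := hγ a; haveI := hγ b
  rw [IsIso.comp_inv_eq, Category.assoc, gamma_natural a b f, IsIso.inv_hom_id_assoc]

theorem gammaG2 (hM : IsMonadOn H m e)
    (hγ : ∀ a : A, IsIso (δ.app (H.obj a) ≫ H.map (m.app a))) (a : A) :
    inv (δ.app (H.obj (H.obj a)) ≫ H.map (m.app (H.obj a))) ≫ H.map (m.app a)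
      = H.map (m.app a) ≫ inv (δ.app (H.obj a) ≫ H.map (m.app a)) := by
  haveI := hγ a; haveI := hγ (H.obj a)
  rw [IsIso.inv_comp_eq, ← Category.assoc, ← gamma_linear hM a, Category.assoc,
    IsIso.hom_inv_id, Category.comp_id]

theorem gammaG3 (hM : IsMonadOn H m e)
    (hγ : ∀ a : A, IsIso (δ.app (H.obj a) ≫ H.map (m.app a))) (a : A) :
    δ.app a ≫ inv (δ.app (H.obj a) ≫ H.map (m.app a)) = H.map (e.app a) := by
  haveI := hγ a
  rw [IsIso.comp_inv_eq, unit_comp_gamma hM a]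

end

section
variable {H : A ⥤ A} (m : H ⋙ H ⟶ H) (e : 𝟭 A ⟶ H) (δ : H ⟶ H ⋙ H) (ε : H ⟶ 𝟭 A)

/-- The candidate antipode built from the inverse of `γ`. -/
noncomputable def antipodeOf (hγ : ∀ a : A, IsIso (δ.app (H.obj a) ≫ H.map (m.app a))) :
    H ⟶ H where
  app a := H.map (e.app a) ≫
    @inv A _ _ _ (δ.app (H.obj a) ≫ H.map (m.app a)) (hγ a) ≫ ε.app (H.obj a)
  naturality a b f := by
    haveI : ∀ a : A, IsIso (δ.app (H.obj a) ≫ H.map (m.app a)) := hγ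
    have he : f ≫ e.app b = e.app a ≫ H.map f := by
      have := e.naturality f; simpa using this
    have hε : H.map (H.map f) ≫ ε.app (H.obj b) = ε.app (H.obj a) ≫ H.map f := by
      have := ε.naturality (H.map f); simpa using this
    rw [← Category.assoc, ← Functor.map_comp, he, Functor.map_comp, Category.assoc,
      reassoc_of% (gammaG1 hγ a b f), hε]
    simp

theorem antipodeOf_app (hγ : ∀ a : A, IsIso (δ.app (H.obj a) ≫ H.map (m.app a))) (a : A) :
    (antipodeOf m e δ ε hγ).app a = H.map (e.app a) ≫
      @inv A _ _ _ (δ.app (H.obj a) ≫ H.map (m.app a)) (hγ a) ≫ ε.app (H.obj a) := rfl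

end

section
variable {H : A ⥤ A} {m : H ⋙ H ⟶ H} {e : 𝟭 A ⟶ H}
    {δ : H ⟶ H ⋙ H} {ε : H ⟶ 𝟭 A}

theorem gamma_iso_to_antipode (hM : IsMonadOn H m e) (hC : IsComonadOn H δ ε)
    (hγ : ∀ a : A, IsIso (δ.app (H.obj a) ≫ H.map (m.app a))) :
    ∃ S : H ⟶ H,
      (∀ a : A, δ.app a ≫ S.app (H.obj a) ≫ m.app a = ε.app a ≫ e.app a) ∧
      (∀ a : A, δ.app a ≫ H.map (S.app a) ≫ m.app a = ε.app a ≫ e.app a) := by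
  haveI : ∀ a : A, IsIso (δ.app (H.obj a) ≫ H.map (m.app a)) := hγ
  set S : H ⟶ H := antipodeOf m e δ ε hγ with hS
  have happ : ∀ a : A, S.app a = H.map (e.app a) ≫
      inv (δ.app (H.obj a) ≫ H.map (m.app a)) ≫ ε.app (H.obj a) := by
    intro a; rw [hS, antipodeOf_app]
  have hS1 : ∀ a : A, δ.app a ≫ S.app (H.obj a) ≫ m.app a = ε.app a ≫ e.app a := by
    intro a
    rw [happ (H.obj a)]
    have hε : H.map (e.app a) ≫ ε.app (H.obj a) = ε.app a ≫ e.app a := by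
      have := ε.naturality (e.app a); simpa using this
    have hεm : ε.app (H.obj (H.obj a)) ≫ m.app a
        = H.map (m.app a) ≫ ε.app (H.obj a) := by
      have := ε.naturality (m.app a); simpa using this.symm
    simp only [Category.assoc]
    rw [hεm, ← Category.assoc (inv _), gammaG2 hM hγ a]
    simp only [Category.assoc]
    have hcollapse : H.map (e.app (H.obj a)) ≫ H.map (m.app a)
        = 𝟙 (H.obj (H.obj a)) := by
      rw [← H.map_comp, hM.unit_left a]; exact H.map_id _
    rw [reassoc_of% hcollapse, reassoc_of% (gammaG3 hM hγ a), hε]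
  refine ⟨S, hS1, ?_⟩
  -- HS axiom
  intro a
  have hinv : inv (δ.app (H.obj a) ≫ H.map (m.app a))
      = δ.app (H.obj a) ≫ H.map (S.app (H.obj a) ≫ m.app a) :=
    IsIso.inv_eq_of_hom_inv_id (gamma_comp_beta hM hC S hS1 a)
  have h2 : δ.app (H.obj a) ≫
      H.map (δ.app (H.obj a) ≫ H.map (S.app (H.obj a) ≫ m.app a) ≫ m.app a)
      = 𝟙 _ := by
    rw [← beta_gamma_expand hC S a, ← hinv, IsIso.inv_hom_id]
  have hφ : δ.app (H.obj a) ≫ H.map (S.app (H.obj a) ≫ m.app a) ≫ m.app a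
      = ε.app (H.obj a) := by
    have nε := ε.naturality
      (δ.app (H.obj a) ≫ H.map (S.app (H.obj a) ≫ m.app a) ≫ m.app a)
    simp only [Functor.id_obj, Functor.id_map] at nε
    calc δ.app (H.obj a) ≫ H.map (S.app (H.obj a) ≫ m.app a) ≫ m.app a
        = δ.app (H.obj a) ≫ ε.app (H.obj (H.obj a)) ≫
            (δ.app (H.obj a) ≫ H.map (S.app (H.obj a) ≫ m.app a) ≫ m.app a) := by
          rw [reassoc_of% (hC.counit_left (H.obj a))]
      _ = δ.app (H.obj a) ≫
            H.map (δ.app (H.obj a) ≫ H.map (S.app (H.obj a) ≫ m.app a) ≫ m.app a) ≫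
            ε.app (H.obj a) := by rw [nε]
      _ = ε.app (H.obj a) := by rw [← Category.assoc, h2, Category.id_comp]
  have step : H.map (e.app a) ≫ δ.app (H.obj a) ≫
      H.map (S.app (H.obj a) ≫ m.app a) ≫ m.app a
      = δ.app a ≫ H.map (S.app a) ≫ m.app a := by
    have nδ := reassoc_of% (δ.naturality (e.app a))
    rw [nδ, ← H.map_comp_assoc, reassoc_of% (S.naturality (e.app a)),
      hM.unit_right a, Category.comp_id]
  have hε : H.map (e.app a) ≫ ε.app (H.obj a) = ε.app a ≫ e.app a := by
    have := ε.naturality (e.app a); simpa using this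
  rw [← step, hφ, hε]

end

section
variable {H : A ⥤ A} {m : H ⋙ H ⟶ H} {e : 𝟭 A ⟶ H}
    {δ : H ⟶ H ⋙ H} {ε : H ⟶ 𝟭 A}

theorem gammap_natural (a b : A) (f : a ⟶ b) :
    H.map (H.map f) ≫ (H.map (δ.app b) ≫ m.app (H.obj b))
      = (H.map (δ.app a) ≫ m.app (H.obj a)) ≫ H.map (H.map f) := by
  have n := δ.naturality f
  simp only [Functor.comp_obj, Functor.comp_map] at n
  have n2 := m.naturality (H.map f)
  simp only [Functor.comp_obj, Functor.comp_map] at n2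
  simp only [Category.assoc]
  rw [← H.map_comp_assoc, n, H.map_comp, Category.assoc, n2]

theorem gammap_linear (hM : IsMonadOn H m e) (a : A) :
    m.app (H.obj a) ≫ (H.map (δ.app a) ≫ m.app (H.obj a))
      = H.map (H.map (δ.app a) ≫ m.app (H.obj a)) ≫ m.app (H.obj a) := by
  have n := reassoc_of% (m.naturality (δ.app a))
  rw [← n, ← hM.assoc (H.obj a), ← H.map_comp_assoc]

theorem unit_comp_gammap (hM : IsMonadOn H m e) (a : A) :
    e.app (H.obj a) ≫ (H.map (δ.app a) ≫ m.app (H.obj a)) = δ.app a := by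
  have n := reassoc_of% (e.naturality (δ.app a))
  rw [← n, hM.unit_left (H.obj a), Category.comp_id]

theorem gammap_comp_counit (hC : IsComonadOn H δ ε) (a : A) :
    (H.map (δ.app a) ≫ m.app (H.obj a)) ≫ H.map (ε.app a) = m.app a := by
  have n := m.naturality (ε.app a)
  simp only [Functor.comp_obj, Functor.comp_map, Functor.id_obj, Functor.id_map] at n
  have hcollapse : H.map (δ.app a) ≫ H.map (H.map (ε.app a)) = 𝟙 (H.obj (H.obj a)) := by
    rw [← H.map_comp, hC.counit_right a]; exact H.map_id _
  rw [Category.assoc, ← n, reassoc_of% hcollapse]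

theorem gammapG1 (hγ : ∀ a : A, IsIso (H.map (δ.app a) ≫ m.app (H.obj a)))
    (a b : A) (f : a ⟶ b) : H.map (H.map f) ≫
      inv (H.map (δ.app b) ≫ m.app (H.obj b))
      = inv (H.map (δ.app a) ≫ m.app (H.obj a)) ≫ H.map (H.map f) := by
  haveI := hγ a; haveI := hγ b
  rw [IsIso.comp_inv_eq, Category.assoc, gammap_natural a b f, IsIso.inv_hom_id_assoc]

theorem gammapG2 (hM : IsMonadOn H m e)
    (hγ : ∀ a : A, IsIso (H.map (δ.app a) ≫ m.app (H.obj a))) (a : A) :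
    H.map (inv (H.map (δ.app a) ≫ m.app (H.obj a))) ≫ m.app (H.obj a)
      = m.app (H.obj a) ≫ inv (H.map (δ.app a) ≫ m.app (H.obj a)) := by
  haveI := hγ a
  rw [Functor.map_inv, IsIso.inv_comp_eq, ← Category.assoc, ← gammap_linear hM a,
    Category.assoc, IsIso.hom_inv_id, Category.comp_id]

theorem gammapG3 (hM : IsMonadOn H m e)
    (hγ : ∀ a : A, IsIso (H.map (δ.app a) ≫ m.app (H.obj a))) (a : A) :
    δ.app a ≫ inv (H.map (δ.app a) ≫ m.app (H.obj a)) = e.app (H.obj a) := by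
  haveI := hγ a
  rw [IsIso.comp_inv_eq, unit_comp_gammap hM a]

end

section
variable {H : A ⥤ A} (m : H ⋙ H ⟶ H) (e : 𝟭 A ⟶ H) (δ : H ⟶ H ⋙ H) (ε : H ⟶ 𝟭 A)

/-- The candidate antipode built from the inverse of `γ'`. -/
noncomputable def antipodeOf' (hγ : ∀ a : A, IsIso (H.map (δ.app a) ≫ m.app (H.obj a))) :
    H ⟶ H where
  app a := e.app (H.obj a) ≫
    @inv A _ _ _ (H.map (δ.app a) ≫ m.app (H.obj a)) (hγ a) ≫ H.map (ε.app a)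
  naturality a b f := by
    haveI : ∀ a : A, IsIso (H.map (δ.app a) ≫ m.app (H.obj a)) := hγ
    have he : H.map f ≫ e.app (H.obj b) = e.app (H.obj a) ≫ H.map (H.map f) := by
      have := e.naturality (H.map f); simpa using this
    have hε : H.map f ≫ ε.app b = ε.app a ≫ f := by
      have := ε.naturality f; simpa using this
    rw [← Category.assoc, he, Category.assoc, reassoc_of% (gammapG1 hγ a b f),
      ← H.map_comp, hε, H.map_comp]
    simp

theorem antipodeOf'_app (hγ : ∀ a : A, IsIso (H.map (δ.app a) ≫ m.app (H.obj a))) (a : A) :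
    (antipodeOf' m e δ ε hγ).app a = e.app (H.obj a) ≫
      @inv A _ _ _ (H.map (δ.app a) ≫ m.app (H.obj a)) (hγ a) ≫ H.map (ε.app a) := rfl

end

section
variable {H : A ⥤ A} {m : H ⋙ H ⟶ H} {e : 𝟭 A ⟶ H}
    {δ : H ⟶ H ⋙ H} {ε : H ⟶ 𝟭 A}

theorem gammap_iso_to_antipode (hM : IsMonadOn H m e) (hC : IsComonadOn H δ ε)
    (hγ : ∀ a : A, IsIso (H.map (δ.app a) ≫ m.app (H.obj a))) :
    ∃ S : H ⟶ H,
      (∀ a : A, δ.app a ≫ S.app (H.obj a) ≫ m.app a = ε.app a ≫ e.app a) ∧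
      (∀ a : A, δ.app a ≫ H.map (S.app a) ≫ m.app a = ε.app a ≫ e.app a) := by
  haveI : ∀ a : A, IsIso (H.map (δ.app a) ≫ m.app (H.obj a)) := hγ
  set S : H ⟶ H := antipodeOf' m e δ ε hγ with hS
  have happ : ∀ a : A, S.app a = e.app (H.obj a) ≫
      inv (H.map (δ.app a) ≫ m.app (H.obj a)) ≫ H.map (ε.app a) := by
    intro a; rw [hS, antipodeOf'_app]
  have hee : ∀ a : A, ε.app a ≫ e.app a = e.app (H.obj a) ≫ H.map (ε.app a) := by
    intro a; have := e.naturality (ε.app a); simpa using this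
  -- HS axiom, directly
  have hS2 : ∀ a : A, δ.app a ≫ H.map (S.app a) ≫ m.app a = ε.app a ≫ e.app a := by
    intro a
    rw [happ a, H.map_comp, H.map_comp]
    have nm := m.naturality (ε.app a)
    simp only [Functor.comp_obj, Functor.comp_map, Functor.id_obj, Functor.id_map] at nm
    simp only [Category.assoc]
    rw [nm, ← Category.assoc (H.map (inv _)), gammapG2 hM hγ a]
    simp only [Category.assoc]
    rw [reassoc_of% (hM.unit_right (H.obj a)), reassoc_of% (gammapG3 hM hγ a), ← hee a]
  refine ⟨S, ?_, hS2⟩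
  -- SH axiom
  intro a
  have hinv : inv (H.map (δ.app a) ≫ m.app (H.obj a))
      = H.map (δ.app a ≫ S.app (H.obj a)) ≫ m.app (H.obj a) :=
    IsIso.inv_eq_of_hom_inv_id (gammap_comp_betap hM hC S hS2 a)
  have h2 : H.map (δ.app a ≫ S.app (H.obj a) ≫ H.map (δ.app a) ≫ m.app (H.obj a)) ≫
      m.app (H.obj a) = 𝟙 _ := by
    rw [← betap_gammap_expand hM S a, ← hinv, IsIso.inv_hom_id]
  have hψ : δ.app a ≫ S.app (H.obj a) ≫ H.map (δ.app a) ≫ m.app (H.obj a)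
      = e.app (H.obj a) := by
    have ne' := e.naturality
      (δ.app a ≫ S.app (H.obj a) ≫ H.map (δ.app a) ≫ m.app (H.obj a))
    simp only [Functor.id_obj, Functor.id_map] at ne'
    calc δ.app a ≫ S.app (H.obj a) ≫ H.map (δ.app a) ≫ m.app (H.obj a)
        = (δ.app a ≫ S.app (H.obj a) ≫ H.map (δ.app a) ≫ m.app (H.obj a)) ≫
            e.app (H.obj (H.obj a)) ≫ m.app (H.obj a) := by
          rw [hM.unit_left (H.obj a), Category.comp_id]
      _ = e.app (H.obj a) ≫
            H.map (δ.app a ≫ S.app (H.obj a) ≫ H.map (δ.app a) ≫ m.app (H.obj a)) ≫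
            m.app (H.obj a) := by
          simp only [Category.assoc]
          rw [reassoc_of% ne']
      _ = e.app (H.obj a) := by rw [h2, Category.comp_id]
  have hcollapse : H.map (δ.app a) ≫ H.map (H.map (ε.app a)) = 𝟙 (H.obj (H.obj a)) := by
    rw [← H.map_comp, hC.counit_right a]; exact H.map_id _
  have t1 : (δ.app a ≫ S.app (H.obj a) ≫ H.map (δ.app a) ≫ m.app (H.obj a)) ≫
      H.map (ε.app a) = δ.app a ≫ S.app (H.obj a) ≫ m.app a := by
    have nm := m.naturality (ε.app a)
    simp only [Functor.comp_obj, Functor.comp_map, Functor.id_obj, Functor.id_map] at nm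
    simp only [Category.assoc]
    rw [← nm, reassoc_of% hcollapse]
  rw [← t1, hψ, ← hee a]

/-- For a bimonad `H`, the following are equivalent: `γ = Hm ∘ δH` is an
isomorphism; `γ' = mH ∘ Hδ` is an isomorphism; `H` has an antipode `S`
(`m ∘ SH ∘ δ = e ∘ ε = m ∘ HS ∘ δ`). -/
theorem stmt10 (H : A ⥤ A) (m : H ⋙ H ⟶ H) (e : 𝟭 A ⟶ H)
    (δ : H ⟶ H ⋙ H) (ε : H ⟶ 𝟭 A) (lam : H ⋙ H ⟶ H ⋙ H)
    (hB : IsBimonadOn H m e δ ε lam) :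
    ((∀ a : A, IsIso (δ.app (H.obj a) ≫ H.map (m.app a)))
      ↔ (∀ a : A, IsIso (H.map (δ.app a) ≫ m.app (H.obj a)))) ∧
    ((∀ a : A, IsIso (δ.app (H.obj a) ≫ H.map (m.app a)))
      ↔ ∃ S : H ⟶ H,
          (∀ a : A, δ.app a ≫ S.app (H.obj a) ≫ m.app a = ε.app a ≫ e.app a) ∧
          (∀ a : A, δ.app a ≫ H.map (S.app a) ≫ m.app a = ε.app a ≫ e.app a)) := by
  refine ⟨⟨?_, ?_⟩, ⟨?_, ?_⟩⟩
  · intro hγ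
    obtain ⟨S, h1, h2⟩ := gamma_iso_to_antipode hB.monad hB.comonad hγ
    intro a
    exact ⟨H.map (δ.app a ≫ S.app (H.obj a)) ≫ m.app (H.obj a),
      gammap_comp_betap hB.monad hB.comonad S h2 a,
      betap_comp_gammap hB.monad hB.comonad S h1 a⟩
  · intro hγ
    obtain ⟨S, h1, h2⟩ := gammap_iso_to_antipode hB.monad hB.comonad hγ
    intro a
    exact ⟨δ.app (H.obj a) ≫ H.map (S.app (H.obj a) ≫ m.app a),
      gamma_comp_beta hB.monad hB.comonad S h1 a,
      beta_comp_gamma hB.monad hB.comonad S h2 a⟩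
  · exact gamma_iso_to_antipode hB.monad hB.comonad
  · rintro ⟨S, h1, h2⟩ a
    exact ⟨δ.app (H.obj a) ≫ H.map (S.app (H.obj a) ≫ m.app a),
      gamma_comp_beta hB.monad hB.comonad S h1 a,
      beta_comp_gamma hB.monad hB.comonad S h2 a⟩
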